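/- For every connected graph G on n ≥ 3 vertices, D(G) - π(G) ≤ (3n-5)/4 if n is odd, and D(G) - π(G) ≤ (3n-5)/4 - 1/(4n-4) if n is even, with equality if and only if G is the path P_n. -/

import Mathlib

open SimpleGraph Finset

/-- The transmission of a vertex: the sum of distances from `v` to all other vertices. -/
noncomputable def transmission {n : ℕ} (G : SimpleGraph (Fin n)) (v : Fin n) : ℕ :=
  ∑ u, G.dist v u

/-- The proximity: the minimum average distance from a vertex to all others. -/
noncomputable def proximity {n : ℕ} (G : SimpleGraph (Fin n)) : ℝ :=
  sInf {x : ℝ | ∃ v : Fin n, x = transmission G v} / (n - 1)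

/-- The remoteness: the maximum average distance from a vertex to all others. -/
noncomputable def remoteness {n : ℕ} (G : SimpleGraph (Fin n)) : ℝ :=
  sSup {x : ℝ | ∃ v : Fin n, x = transmission G v} / (n - 1)

/-- The diameter of a graph: the maximum distance between two vertices. -/
noncomputable def graphDiam {n : ℕ} (G : SimpleGraph (Fin n)) : ℕ :=
  Finset.univ.sup fun p : Fin n × Fin n => G.dist p.1 p.2

-- walk getVert dist lemmas
lemma dist_getVert_le {V : Type*} {G : SimpleGraph V} {a b : V} (hG : G.Connected)
    (w : G.Walk a b) : ∀ k i, i + k ≤ w.length →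
    G.dist (w.getVert i) (w.getVert (i+k)) ≤ k := by
  intro k
  induction k with
  | zero => intro i _; simp [SimpleGraph.dist_self]
  | succ k ih =>
    intro i hik
    have h1 : G.Adj (w.getVert (i+k)) (w.getVert (i+k+1)) := w.adj_getVert_succ (by omega)
    calc G.dist (w.getVert i) (w.getVert (i+(k+1)))
        ≤ G.dist (w.getVert i) (w.getVert (i+k)) + G.dist (w.getVert (i+k)) (w.getVert (i+k+1)) := by
          have := hG.dist_triangle (u := w.getVert i) (v := w.getVert (i+k)) (w := w.getVert (i+(k+1)))
          simpa [← add_assoc] using this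
      _ ≤ k + 1 := by
          have h2 : G.dist (w.getVert (i+k)) (w.getVert (i+k+1)) ≤ 1 := by
            simpa using SimpleGraph.dist_le h1.toWalk
          have := ih i (by omega)
          omega

lemma dist_getVert_eq {V : Type*} {G : SimpleGraph V} {a b : V} (hG : G.Connected)
    (w : G.Walk a b) (hw : w.length = G.dist a b) {i j : ℕ} (hij : i ≤ j) (hj : j ≤ w.length) :
    G.dist (w.getVert i) (w.getVert j) = j - i := by
  have hle : G.dist (w.getVert i) (w.getVert j) ≤ j - i := by
    have := dist_getVert_le hG w (j - i) i (by omega)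
    rwa [show i + (j-i) = j by omega] at this
  have h1 : G.dist a (w.getVert i) ≤ i := by
    have := dist_getVert_le hG w i 0 (by omega)
    simpa using this
  have h2 : G.dist (w.getVert j) b ≤ w.length - j := by
    have := dist_getVert_le hG w (w.length - j) j (by omega)
    rwa [show j + (w.length - j) = w.length by omega, w.getVert_length] at this
  have htri : G.dist a b ≤ G.dist a (w.getVert i) + G.dist (w.getVert i) (w.getVert j) + G.dist (w.getVert j) b :=
    le_trans (hG.dist_triangle) (by gcongr; exact hG.dist_triangle)
  omega

lemma sum_T : ∀ D : ℕ, ∑ i ∈ range (D+1), (D - 2*i) = (D+1)^2/4 := by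
  intro D
  induction D using Nat.twoStepInduction with
  | zero => simp
  | one => decide
  | more D ih _ =>
    have h1 : ∑ i ∈ range (D+2+1), (D+2 - 2*i) =
        (∑ i ∈ range (D+2), (D+2 - 2*(i+1))) + (D+2 - 2*0) := Finset.sum_range_succ' _ _
    have h2 : ∑ i ∈ range (D+2), (D+2 - 2*(i+1)) = ∑ i ∈ range (D+1), (D - 2*i) := by
      rw [Finset.sum_range_succ]
      have : ∀ i, D+2 - 2*(i+1) = D - 2*i := by intro i; omega
      simp [this]
      omega
    have h3 : (D+2+1)^2 = (D+1)^2 + 4*(D+2) := by ring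
    rw [h1, h2, ih]
    omega

lemma sum_c (D : ℕ) : ∑ i ∈ range (D+1), ((D - 2*i) + (2*i - D)) = 2 * ((D+1)^2/4) := by
  rw [Finset.sum_add_distrib, sum_T]
  have : ∑ i ∈ range (D+1), (2*i - D) = ∑ i ∈ range (D+1), (D - 2*i) := by
    rw [← Finset.sum_range_reflect]
    apply Finset.sum_congr rfl
    intro i hi
    simp only [Finset.mem_range] at hi
    omega
  rw [this, sum_T]
  ring

lemma transmission_lower {n : ℕ} {G : SimpleGraph (Fin n)} (hG : G.Connected)
    {a b : Fin n} (w : G.Walk a b) (hw : w.length = G.dist a b) (hD1 : 1 ≤ w.length)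
    (v : Fin n) :
    (w.length+1)^2/4 + (n - 1 - w.length) ≤ transmission G v := by
  classical
  set D := w.length with hD
  set f : ℕ → ℕ := fun i => G.dist v (w.getVert i) with hf
  set P : Finset (Fin n) := (range (D+1)).image (fun i => w.getVert i) with hP
  have hinj : Set.InjOn (fun i => w.getVert i) (range (D+1)) := by
    intro i hi j hj hEq
    have hEq' : w.getVert i = w.getVert j := hEq
    simp only [coe_range, Set.mem_Iio] at hi hj
    rcases le_total i j with h | h
    · have := dist_getVert_eq hG w hw h (by omega)
      rw [hEq'] at this
      simp [SimpleGraph.dist_self] at this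
      omega
    · have := dist_getVert_eq hG w hw h (by omega)
      rw [hEq'] at this
      simp [SimpleGraph.dist_self] at this
      omega
  have hcard : P.card = D + 1 := by
    rw [hP, Finset.card_image_of_injOn hinj, card_range]
  have hDn : D + 1 ≤ n := by
    have := Finset.card_le_card (Finset.subset_univ P)
    simpa [hcard] using this
  have hsplit : transmission G v = (∑ u ∈ univ \ P, G.dist v u) + ∑ u ∈ P, G.dist v u := by
    rw [transmission, ← Finset.sum_sdiff (Finset.subset_univ P)]
  have hS1 : ∑ u ∈ P, G.dist v u = ∑ i ∈ range (D+1), f i := by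
    rw [hP, Finset.sum_image hinj]
  have hreflect : ∑ i ∈ range (D+1), f (D - i) = ∑ i ∈ range (D+1), f i := by
    rw [← Finset.sum_range_reflect]
    apply Finset.sum_congr rfl
    intro i hi
    simp only [Finset.mem_range] at hi
    congr 1
    omega
  have hdouble : 2 * ∑ i ∈ range (D+1), f i = ∑ i ∈ range (D+1), (f i + f (D - i)) := by
    rw [Finset.sum_add_distrib, hreflect]; ring
  have hpair : ∀ i ∈ range (D+1), (D - 2*i) + (2*i - D) ≤ f i + f (D - i) := by
    intro i hi
    simp only [Finset.mem_range] at hi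
    have htri : G.dist (w.getVert i) (w.getVert (D - i)) ≤ f i + f (D - i) := by
      have h0 := hG.dist_triangle (u := w.getVert i) (v := v) (w := w.getVert (D - i))
      have h1 : G.dist (w.getVert i) v = f i := SimpleGraph.dist_comm ..
      have h2 : G.dist v (w.getVert (D - i)) = f (D - i) := rfl
      omega
    rcases le_total i (D - i) with h | h
    · rw [dist_getVert_eq hG w hw h (by omega)] at htri
      omega
    · have hc : G.dist (w.getVert i) (w.getVert (D-i)) = G.dist (w.getVert (D-i)) (w.getVert i) :=
        SimpleGraph.dist_comm ..
      rw [hc, dist_getVert_eq hG w hw h (by omega)] at htri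
      omega
  by_cases hv : v ∈ P
  · -- v on the path
    have h1 : 2 * ((D+1)^2/4) ≤ 2 * ∑ i ∈ range (D+1), f i := by
      rw [hdouble, ← sum_c D]
      exact Finset.sum_le_sum hpair
    have h2 : (univ \ P).card ≤ ∑ u ∈ univ \ P, G.dist v u := by
      calc (univ \ P).card = ∑ _u ∈ univ \ P, 1 := by simp
        _ ≤ ∑ u ∈ univ \ P, G.dist v u := by
            apply Finset.sum_le_sum
            intro u hu
            simp only [Finset.mem_sdiff] at hu
            exact hG.pos_dist_of_ne (fun h => hu.2 (h ▸ hv))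
    have hc2 : (univ \ P).card = n - (D+1) := by
      rw [Finset.card_sdiff_of_subset (Finset.subset_univ P), hcard]
      simp
    rw [hsplit, hS1]
    omega
  · -- v off the path
    have hf1 : ∀ i ∈ range (D+1), 1 ≤ f i := by
      intro i hi
      apply hG.pos_dist_of_ne
      intro h
      exact hv (hP ▸ Finset.mem_image.mpr ⟨i, hi, h.symm⟩)
    have h1 : 2 * ((D+1)^2/4) + 2 ≤ 2 * ∑ i ∈ range (D+1), f i := by
      rw [hdouble]
      have hterm : ∀ i ∈ range (D+1),
          ((D - 2*i) + (2*i - D)) + (2 - ((D - 2*i) + (2*i - D))) ≤ f i + f (D - i) := by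
        intro i hi
        simp only [Finset.mem_range] at hi
        have ha := hpair i (Finset.mem_range.mpr hi)
        have hb : 1 ≤ f i := hf1 i (Finset.mem_range.mpr hi)
        have hc : 1 ≤ f (D - i) := hf1 (D - i) (Finset.mem_range.mpr (by omega))
        omega
      have hsum := Finset.sum_le_sum hterm
      rw [Finset.sum_add_distrib, sum_c] at hsum
      have hpairsub : ({D/2, D/2+1} : Finset ℕ) ⊆ range (D+1) := by
        intro x hx
        simp only [Finset.mem_insert, Finset.mem_singleton] at hx
        simp only [Finset.mem_range]
        omega
      have hpairsum : 2 ≤ ∑ i ∈ ({D/2, D/2+1} : Finset ℕ), (2 - ((D - 2*i) + (2*i - D))) := by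
        rw [Finset.sum_pair (by omega)]
        omega
      have hmono : ∑ i ∈ ({D/2, D/2+1} : Finset ℕ), (2 - ((D - 2*i) + (2*i - D))) ≤
          ∑ i ∈ range (D+1), (2 - ((D - 2*i) + (2*i - D))) :=
        Finset.sum_le_sum_of_subset hpairsub
      omega
    have hvP : v ∈ univ \ P := Finset.mem_sdiff.mpr ⟨Finset.mem_univ v, hv⟩
    have h2 : (univ \ P).card - 1 ≤ ∑ u ∈ univ \ P, G.dist v u := by
      calc (univ \ P).card - 1 = ((univ \ P).erase v).card := by
            rw [Finset.card_erase_of_mem hvP]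
        _ = ∑ _u ∈ (univ \ P).erase v, 1 := by simp
        _ ≤ ∑ u ∈ (univ \ P).erase v, G.dist v u := by
            apply Finset.sum_le_sum
            intro u hu
            exact hG.pos_dist_of_ne (fun h => (Finset.mem_erase.mp hu).1 h.symm)
        _ ≤ ∑ u ∈ univ \ P, G.dist v u :=
            Finset.sum_le_sum_of_subset (Finset.erase_subset _ _)
    have hc2 : (univ \ P).card = n - (D+1) := by
      rw [Finset.card_sdiff_of_subset (Finset.subset_univ P), hcard]
      simp
    rw [hsplit, hS1]
    omega

lemma pathGraph_dist_le {n : ℕ} (hn : 1 ≤ n) :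
    ∀ (k : ℕ) (u v : Fin n), v.val = u.val + k → (pathGraph n).dist u v ≤ k := by
  have hconn : (pathGraph n).Connected := by
    obtain ⟨m, rfl⟩ : ∃ m, n = m + 1 := ⟨n - 1, by omega⟩
    exact pathGraph_connected m
  intro k
  induction k with
  | zero =>
    intro u v h
    have : u = v := Fin.ext (by omega)
    simp [this, SimpleGraph.dist_self]
  | succ k ih =>
    intro u v h
    have hvn : v.val < n := v.isLt
    set mid : Fin n := ⟨u.val + k, by omega⟩ with hmid
    have hadj : (pathGraph n).Adj mid v := by
      rw [pathGraph_adj]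
      left
      simp only [hmid]
      omega
    have h1 : (pathGraph n).dist mid v ≤ 1 := by
      simpa using SimpleGraph.dist_le hadj.toWalk
    have h2 := ih u mid rfl
    have := hconn.dist_triangle (u := u) (v := mid) (w := v)
    omega

lemma pathGraph_walk_lower {n : ℕ} {u v : Fin n} (w : (pathGraph n).Walk u v) :
    (u.val - v.val) + (v.val - u.val) ≤ w.length := by
  induction w with
  | nil => simp
  | cons h q ih =>
    rw [pathGraph_adj] at h
    rw [SimpleGraph.Walk.length_cons]
    omega

lemma pathGraph_dist {n : ℕ} (hn : 1 ≤ n) (u v : Fin n) :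
    (pathGraph n).dist u v = (u.val - v.val) + (v.val - u.val) := by
  have hconn : (pathGraph n).Connected := by
    obtain ⟨m, rfl⟩ : ∃ m, n = m + 1 := ⟨n - 1, by omega⟩
    exact pathGraph_connected m
  obtain ⟨w, hw⟩ := hconn.exists_walk_length_eq_dist u v
  have hlow := pathGraph_walk_lower w
  rw [hw] at hlow
  rcases le_total u.val v.val with h | h
  · have := pathGraph_dist_le hn (v.val - u.val) u v (by omega)
    omega
  · have := pathGraph_dist_le hn (u.val - v.val) v u (by omega)
    have hc : (pathGraph n).dist u v = (pathGraph n).dist v u := SimpleGraph.dist_comm ..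
    omega

lemma iso_dist_eq {n : ℕ} {G H : SimpleGraph (Fin n)} (hG : G.Connected) (hH : H.Connected)
    (φ : G ≃g H) (u v : Fin n) : G.dist u v = H.dist (φ u) (φ v) := by
  obtain ⟨p, hp⟩ := hG.exists_walk_length_eq_dist u v
  obtain ⟨q, hq⟩ := hH.exists_walk_length_eq_dist (φ u) (φ v)
  have h1 : H.dist (φ u) (φ v) ≤ p.length := by
    have := SimpleGraph.dist_le (p.map φ.toHom)
    simpa using this
  have h2 : G.dist u v ≤ q.length := by
    have := SimpleGraph.dist_le ((q.map φ.symm.toHom).copy (φ.symm_apply_apply u) (φ.symm_apply_apply v))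
    simpa using this
  omega

-- Gauss-type sum
lemma sum_abs_gauss : ∀ (d c : ℕ), 2 * ∑ k ∈ range (c+d+1), ((c-k)+(k-c)) = c*(c+1) + d*(d+1) := by
  intro d
  induction d with
  | zero =>
    intro c
    have h1 : ∀ k ∈ range (c+1), (c-k)+(k-c) = c - k := by
      intro k hk; simp only [mem_range] at hk; omega
    rw [Finset.sum_congr rfl h1]
    have h2 : ∑ k ∈ range (c+1), (c - k) = ∑ k ∈ range (c+1), k := by
      rw [← Finset.sum_range_reflect]
      apply Finset.sum_congr rfl
      intro i hi; simp only [mem_range] at hi; omega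
    rw [h2]
    have h3 := Finset.sum_range_id_mul_two (c+1)
    simp only [Nat.add_sub_cancel] at h3
    linear_combination h3
  | succ d ih =>
    intro c
    have : c + (d+1) + 1 = (c + d + 1) + 1 := by omega
    rw [this, Finset.sum_range_succ, mul_add, ih c]
    have h2 : (c - (c+d+1)) + ((c+d+1) - c) = d + 1 := by omega
    rw [h2]
    ring

lemma center_transmission (n : ℕ) (hn : 3 ≤ n) :
    ∑ k ∈ range n, ((n/2 - k) + (k - n/2)) = n^2/4 := by
  have h := sum_abs_gauss (n - 1 - n/2) (n/2)
  have hn' : n/2 + (n - 1 - n/2) + 1 = n := by omega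
  rw [hn'] at h
  rcases Nat.even_or_odd n with ⟨m, hm⟩ | ⟨m, hm⟩
  · subst hm
    have hm2 : 2 ≤ m := by omega
    have hc : (m+m)/2 = m := by omega
    have hd : (m+m) - 1 - (m+m)/2 = m - 1 := by omega
    have hsq : (m+m)^2 = 4*(m*m) := by ring
    have hq : (m+m)^2/4 = m*m := by omega
    simp only [hc] at *
    simp only [show m + m - 1 - m = m - 1 from by omega] at h
    have hkey : m*(m+1) + (m-1)*((m-1)+1) = 2*(m*m) := by
      obtain ⟨t, rfl⟩ : ∃ t, m = t + 1 := ⟨m - 1, by omega⟩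
      simp only [Nat.add_sub_cancel]
      ring
    rw [hq]
    omega
  · subst hm
    have hc : (2*m+1)/2 = m := by omega
    have hsq : (2*m+1)^2 = 4*(m*m+m) + 1 := by ring
    have hq : (2*m+1)^2/4 = m*m+m := by omega
    have hd : (2*m+1) - 1 - (2*m+1)/2 = m := by omega
    simp only [hc] at *
    simp only [show 2*m + 1 - 1 - m = m from by omega] at h
    have hkey : m*(m+1) + m*(m+1) = 2*(m*m+m) := by ring
    rw [hq]
    omega

lemma sq_mod4 (k : ℕ) : k^2 % 4 = 0 ∨ k^2 % 4 = 1 := by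
  rcases Nat.even_or_odd k with ⟨t, rfl⟩ | ⟨t, rfl⟩
  · left
    have : (t+t)^2 = 4*(t*t) := by ring
    omega
  · right
    have : (2*t+1)^2 = 4*(t*t+t)+1 := by ring
    omega

lemma arith_eq (n : ℕ) (hn : 3 ≤ n) :
    4*(n-1)*(n-1) + (if Even n then 1 else 0) = 4*(n^2/4) + (3*n-5)*(n-1) := by
  rcases Nat.even_or_odd n with hE | hO
  · obtain ⟨m, rfl⟩ := hE
    rw [if_pos (by exact ⟨m, rfl⟩)]
    have hm : 2 ≤ m := by omega
    have hsq : (m+m)^2 = 4*(m*m) := by ring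
    have hq : (m+m)^2/4 = m*m := by omega
    rw [hq]
    zify [show 1 ≤ m+m by omega, show 5 ≤ 3*(m+m) by omega]
    ring
  · obtain ⟨m, hm⟩ := hO
    subst hm
    rw [if_neg (by rw [Nat.even_iff]; omega)]
    have hm1 : 1 ≤ m := by omega
    have hsq : (2*m+1)^2 = 4*(m*m+m)+1 := by ring
    have hq : (2*m+1)^2/4 = m*m+m := by omega
    rw [hq]
    zify [show 1 ≤ 2*m+1 by omega, show 5 ≤ 3*(2*m+1) by omega]
    ring

lemma arith_slack (n : ℕ) (hn : 3 ≤ n) :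
    ∀ d D, 1 ≤ D → D + d = n - 1 →
    4*D*(n-1) + (if Even n then 1 else 0) + 4*d ≤
      4*((D+1)^2/4 + (n-1-D)) + (3*n-5)*(n-1) := by
  intro d
  induction d with
  | zero =>
    intro D h1 hD
    have hD' : D = n-1 := by omega
    subst hD'
    rw [show (n-1+1) = n by omega]
    have := arith_eq n hn
    omega
  | succ d ih =>
    intro D h1 hD
    have ihD := ih (D+1) (by omega) (by omega)
    have hexp : (D+1+1)^2 = (D+1)^2 + (2*D+3) := by ring
    have hmod := sq_mod4 (D+1)
    have hprod : 4*(D+1)*(n-1) = 4*D*(n-1) + 4*(n-1) := by ring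
    omega

lemma iso_of_geodesic {n : ℕ} {G : SimpleGraph (Fin n)} (hG : G.Connected) (hn : 3 ≤ n)
    {a b : Fin n} (w : G.Walk a b) (hw : w.length = G.dist a b) (hlen : w.length = n - 1) :
    Nonempty (G ≃g pathGraph n) := by
  have hinj : Function.Injective (fun i : Fin n => w.getVert i.val) := by
    intro i j hEq
    have hEq' : w.getVert i.val = w.getVert j.val := hEq
    have hi := i.isLt
    have hj := j.isLt
    rcases le_total i.val j.val with h | h
    · have := dist_getVert_eq hG w hw h (by omega)
      rw [hEq'] at this
      simp [SimpleGraph.dist_self] at this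
      exact Fin.ext (by omega)
    · have := dist_getVert_eq hG w hw h (by omega)
      rw [hEq'] at this
      simp [SimpleGraph.dist_self] at this
      exact Fin.ext (by omega)
  have hbij : Function.Bijective (fun i : Fin n => w.getVert i.val) :=
    (Fintype.bijective_iff_injective_and_card _).mpr ⟨hinj, rfl⟩
  let e := Equiv.ofBijective _ hbij
  have he : ∀ i : Fin n, e i = w.getVert i.val := fun _ => rfl
  have hadj : ∀ i j : Fin n, G.Adj (e i) (e j) ↔ (pathGraph n).Adj i j := by
    intro i j
    rw [pathGraph_adj, he, he]
    have hi := i.isLt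
    have hj := j.isLt
    constructor
    · intro h
      have hne : i.val ≠ j.val := by
        intro hv
        exact h.ne (by rw [Fin.ext_iff] at *; rw [hv])
      have hd1 : G.dist (w.getVert i.val) (w.getVert j.val) = 1 :=
        SimpleGraph.dist_eq_one_iff_adj.mpr h
      rcases le_total i.val j.val with hle | hle
      · rw [dist_getVert_eq hG w hw hle (by omega)] at hd1
        omega
      · have hc : G.dist (w.getVert i.val) (w.getVert j.val)
            = G.dist (w.getVert j.val) (w.getVert i.val) := SimpleGraph.dist_comm ..
        rw [hc, dist_getVert_eq hG w hw hle (by omega)] at hd1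
        omega
    · intro h
      rcases h with h | h
      · have := w.adj_getVert_succ (i := i.val) (by omega)
        rwa [show i.val + 1 = j.val from h] at this
      · have := (w.adj_getVert_succ (i := j.val) (by omega)).symm
        rwa [show j.val + 1 = i.val from h] at this
  exact ⟨(⟨e, fun {i j} => hadj i j⟩ : pathGraph n ≃g G).symm⟩


theorem diam_sub_proximity {n : ℕ} (hn : 3 ≤ n) (G : SimpleGraph (Fin n))
    (hG : G.Connected) :
    (Odd n → (graphDiam G : ℝ) - proximity G ≤ (3 * n - 5) / 4 ∧
      ((graphDiam G : ℝ) - proximity G = (3 * n - 5) / 4 ↔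
        Nonempty (G ≃g SimpleGraph.pathGraph n))) ∧
    (Even n → (graphDiam G : ℝ) - proximity G ≤ (3 * n - 5) / 4 - 1 / (4 * n - 4) ∧
      ((graphDiam G : ℝ) - proximity G = (3 * n - 5) / 4 - 1 / (4 * n - 4) ↔
        Nonempty (G ≃g SimpleGraph.pathGraph n))) := by
  classical
  have hn0 : 0 < n := by omega
  have hnR : (3:ℝ) ≤ (n:ℝ) := by exact_mod_cast hn
  have hNpos : (0:ℝ) < (n:ℝ) - 1 := by linarith
  -- minimum transmission vertex
  obtain ⟨v₀, -, hv₀⟩ := Finset.exists_min_image (univ : Finset (Fin n)) (transmission G)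
    ⟨⟨0, hn0⟩, Finset.mem_univ _⟩
  have hsInf : sInf {x : ℝ | ∃ v : Fin n, x = transmission G v} = (transmission G v₀ : ℝ) := by
    apply IsLeast.csInf_eq
    constructor
    · exact ⟨v₀, rfl⟩
    · rintro x ⟨v, rfl⟩
      exact_mod_cast hv₀ v (Finset.mem_univ v)
  have hπ : proximity G = (transmission G v₀ : ℝ) / ((n:ℝ) - 1) := by
    rw [proximity, hsInf]
  -- diameter
  set D := graphDiam G with hDdef
  obtain ⟨pr, -, hpr⟩ := Finset.exists_mem_eq_sup (univ : Finset (Fin n × Fin n))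
    ⟨(⟨0, hn0⟩, ⟨0, hn0⟩), Finset.mem_univ _⟩ (fun p => G.dist p.1 p.2)
  have hDeq : G.dist pr.1 pr.2 = D := by rw [hDdef, graphDiam, hpr]
  have hdle : ∀ u v : Fin n, G.dist u v ≤ D := by
    intro u v
    rw [hDdef, graphDiam]
    exact Finset.le_sup (f := fun p : Fin n × Fin n => G.dist p.1 p.2) (Finset.mem_univ (u, v))
  have hD1 : 1 ≤ D := by
    have hne : (⟨0, by omega⟩ : Fin n) ≠ ⟨1, by omega⟩ := by simp [Fin.ext_iff]
    exact le_trans (hG.pos_dist_of_ne hne) (hdle _ _)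
  obtain ⟨w, hw⟩ := hG.exists_walk_length_eq_dist pr.1 pr.2
  have hwD : w.length = D := by rw [hw, hDeq]
  have hkey : ∀ v, (D+1)^2/4 + (n - 1 - D) ≤ transmission G v := by
    intro v
    have := transmission_lower hG w hw (by omega) v
    rwa [hwD] at this
  have hDn : D ≤ n - 1 := by
    have hpath := w.isPath_of_length_eq_dist hw
    have := hpath.length_lt
    simp only [Fintype.card_fin] at this
    omega
  set ε : ℕ := if Even n then 1 else 0 with hε
  set B : ℝ := ((3*(n:ℝ)-5)*((n:ℝ)-1) - (ε:ℕ)) / (4*((n:ℝ)-1)) with hB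
  -- main natural-number inequality
  have hnat : 4*D*(n-1) + ε + 4*(n-1-D) ≤ 4*(transmission G v₀) + (3*n-5)*(n-1) := by
    have h1 := arith_slack n hn (n-1-D) D hD1 (by omega)
    have h2 := hkey v₀
    omega
  have hcast : 4*(D:ℝ)*((n:ℝ)-1) + (ε:ℝ) + 4*((n:ℝ)-1-(D:ℝ)) ≤
      4*(transmission G v₀ : ℝ) + (3*(n:ℝ)-5)*((n:ℝ)-1) := by
    rify [show 1 ≤ n by omega, show 5 ≤ 3*n by omega, hDn] at hnat
    linarith [hnat]
  -- the main inequality with slack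
  have hineq : (D:ℝ) - proximity G ≤ B - (((n:ℝ)-1-(D:ℝ)))/((n:ℝ)-1) := by
    rw [hπ, hB]
    have hid : (D:ℝ) - (transmission G v₀ : ℝ)/((n:ℝ)-1) -
        (((3*(n:ℝ)-5)*((n:ℝ)-1) - (ε:ℕ)) / (4*((n:ℝ)-1)) - (((n:ℝ)-1-(D:ℝ)))/((n:ℝ)-1)) =
        (4*(D:ℝ)*((n:ℝ)-1) + (ε:ℝ) + 4*((n:ℝ)-1-(D:ℝ))
          - (4*(transmission G v₀ : ℝ) + (3*(n:ℝ)-5)*((n:ℝ)-1))) / (4*((n:ℝ)-1)) := by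
      field_simp
      ring
    have hnum : (4*(D:ℝ)*((n:ℝ)-1) + (ε:ℝ) + 4*((n:ℝ)-1-(D:ℝ))
          - (4*(transmission G v₀ : ℝ) + (3*(n:ℝ)-5)*((n:ℝ)-1))) / (4*((n:ℝ)-1)) ≤ 0 :=
      div_nonpos_of_nonpos_of_nonneg (by linarith) (by linarith)
    linarith [hid, hnum]
  have hDleR : (D:ℝ) ≤ (n:ℝ) - 1 := by
    have : (D:ℝ) ≤ ((n-1 : ℕ):ℝ) := by exact_mod_cast hDn
    rw [Nat.cast_sub (by omega)] at this
    exact_mod_cast this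
  have hle : (D:ℝ) - proximity G ≤ B := by
    have : (0:ℝ) ≤ (((n:ℝ)-1-(D:ℝ)))/((n:ℝ)-1) :=
      div_nonneg (by linarith) (le_of_lt hNpos)
    linarith
  -- equality iff path graph
  have hiff : ((D:ℝ) - proximity G = B) ↔ Nonempty (G ≃g pathGraph n) := by
    constructor
    · intro heq
      have hDeqn : D = n - 1 := by
        by_contra hne
        have hlt : D ≤ n - 2 := by omega
        have hltR : (D:ℝ) ≤ (n:ℝ) - 2 := by
          have : (D:ℝ) ≤ ((n-2 : ℕ):ℝ) := by exact_mod_cast hlt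
          rw [Nat.cast_sub (by omega)] at this
          push_cast at this
          linarith
        have hpos : (1:ℝ)/((n:ℝ)-1) ≤ (((n:ℝ)-1-(D:ℝ)))/((n:ℝ)-1) := by
          gcongr
          linarith
        have h1N : (0:ℝ) < 1/((n:ℝ)-1) := by positivity
        linarith
      exact iso_of_geodesic hG hn w hw (by omega)
    · rintro ⟨φ⟩
      have hpc : (pathGraph n).Connected := by
        obtain ⟨m, rfl⟩ : ∃ m, n = m + 1 := ⟨n - 1, by omega⟩
        exact pathGraph_connected m
      have hdist : ∀ u v, G.dist u v = (pathGraph n).dist (φ u) (φ v) := iso_dist_eq hG hpc φ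
      have hDiam : D = n - 1 := by
        apply le_antisymm
        · rw [hDdef, graphDiam]
          apply Finset.sup_le
          intro p _
          rw [hdist, pathGraph_dist (by omega)]
          have h1 := (φ p.1).isLt
          have h2 := (φ p.2).isLt
          omega
        · have hd : G.dist (φ.symm ⟨0, hn0⟩) (φ.symm ⟨n-1, by omega⟩) = n-1 := by
            rw [hdist, pathGraph_dist (by omega), φ.apply_symm_apply, φ.apply_symm_apply]
            simp
          exact hd ▸ hdle _ _
      have hcn : n/2 < n := by omega
      have htc : transmission G (φ.symm ⟨n/2, hcn⟩) = n^2/4 := by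
        rw [transmission]
        have hrw : ∀ u, G.dist (φ.symm ⟨n/2, hcn⟩) u
            = (n/2 - (φ u).val) + ((φ u).val - n/2) := by
          intro u
          rw [hdist, φ.apply_symm_apply, pathGraph_dist (by omega)]
        simp_rw [hrw]
        calc ∑ x : Fin n, ((n/2 - ((φ x) : Fin n).val) + (((φ x) : Fin n).val - n/2))
            = ∑ x : Fin n, ((n/2 - x.val) + (x.val - n/2)) := by
              have h := Equiv.sum_comp φ.toEquiv (fun x : Fin n => (n/2 - x.val) + (x.val - n/2))
              simpa using h
          _ = ∑ k ∈ range n, ((n/2 - k) + (k - n/2)) :=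
              Fin.sum_univ_eq_sum_range (fun k => (n/2 - k) + (k - n/2)) n
          _ = n^2/4 := center_transmission n hn
      have ht0 : transmission G v₀ = n^2/4 := by
        have hub := hv₀ _ (Finset.mem_univ (φ.symm ⟨n/2, hcn⟩))
        rw [htc] at hub
        have hlb := hkey v₀
        rw [hDiam, show n-1+1 = n by omega] at hlb
        omega
      -- final equality computation
      set q : ℕ := n^2/4 with hqdef
      have he := arith_eq n hn
      rw [← hε, ← hqdef] at he
      rify [show 1 ≤ n by omega, show 5 ≤ 3*n by omega] at he
      rw [hπ, ht0, hB, hDiam]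
      rw [Nat.cast_sub (show 1 ≤ n by omega)]
      push_cast
      field_simp
      linear_combination he
  -- assemble
  have hBodd : Odd n → B = (3*(n:ℝ)-5)/4 := by
    intro hodd
    rw [hB, hε, if_neg ((Nat.not_even_iff_odd.mpr hodd))]
    push_cast
    field_simp
    ring
  have hBeven : Even n → B = (3*(n:ℝ)-5)/4 - 1/(4*(n:ℝ)-4) := by
    intro heven
    rw [hB, hε, if_pos heven]
    push_cast
    rw [div_sub_div _ _ (by norm_num : (4:ℝ) ≠ 0) (by linarith : (4*(n:ℝ)-4) ≠ 0),
      div_eq_div_iff (ne_of_gt (by linarith)) (ne_of_gt (by linarith))]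
    ring
  constructor
  · intro hodd
    rw [← hBodd hodd]
    exact ⟨hle, hiff⟩
  · intro heven
    rw [← hBeven heven]
    exact ⟨hle, hiff⟩
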